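/- Let n ≥ 1, let f(z,w) = w^n + f₁(z)w^{n-1} + ⋯ + f_n(z) ∈ ℂ[z,w] be monic of degree n in w and squarefree, let V_f = {(z,w) ∈ ℂ × ℂ : f(z,w) = 0}, and let B = {z ∈ ℂ : f(z,·) has fewer than n distinct roots} (a finite set). Then the restriction of the first-coordinate projection pr₁ to V_f ∖ (B × ℂ), viewed as a map onto ℂ ∖ B, is a covering map, and every fiber has exactly n elements (an n-sheeted covering). -/

import Mathlib

open Polynomial Set Metric Filter Topology

namespace Statement1Aux

variable {n : ℕ} {f : Polynomial (Polynomial ℂ)}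

/-- evaluation identity -/
lemma eval_eq (f : Polynomial (Polynomial ℂ)) (z w : ℂ) :
    eval w (f.map (evalRingHom z)) = eval z (f.eval (C w)) := by
  have h : (evalRingHom z) (C w) = w := by simp
  rw [eval_map, ← h, eval₂_at_apply, h]
  simp

lemma cont_eval (f : Polynomial (Polynomial ℂ)) (w : ℂ) :
    Continuous fun z => eval w (f.map (evalRingHom z)) := by
  simp only [eval_eq]
  exact (f.eval (C w)).continuous

lemma monic_map (hmonic : f.Monic) (z : ℂ) : (f.map (evalRingHom z)).Monic :=
  hmonic.map _

lemma natDegree_map' (hmonic : f.Monic) (hdeg : f.natDegree = n) (z : ℂ) :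
    (f.map (evalRingHom z)).natDegree = n := by
  rw [hmonic.natDegree_map, hdeg]

lemma card_roots (hmonic : f.Monic) (hdeg : f.natDegree = n) (z : ℂ) :
    Multiset.card (f.map (evalRingHom z)).roots = n := by
  rw [splits_iff_card_roots.mp (IsAlgClosed.splits _), natDegree_map' hmonic hdeg]

lemma pow_le_prod (v : ℂ) (δ : ℝ) (hδ : 0 ≤ δ) (s : Multiset ℂ)
    (h : ∀ r ∈ s, δ ≤ ‖v - r‖) :
    δ ^ Multiset.card s ≤ ‖(s.map fun r => v - r).prod‖ := by
  induction s using Multiset.induction_on with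
  | empty => simp
  | cons a s ih =>
    simp only [Multiset.map_cons, Multiset.prod_cons, Multiset.card_cons, norm_mul]
    rw [pow_succ']
    exact mul_le_mul (h a (Multiset.mem_cons_self a s))
      (ih fun r hr => h r (Multiset.mem_cons_of_mem hr)) (pow_nonneg hδ _) (norm_nonneg _)

/-- Key perturbation lemma: if `|g z (v)| < δ^n` then `g z` has a root within `δ` of `v`. -/
lemma exists_root_near (hmonic : f.Monic) (hdeg : f.natDegree = n) (z v : ℂ) (δ : ℝ)
    (hδ : 0 < δ) (hv : ‖eval v (f.map (evalRingHom z))‖ < δ ^ n) :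
    ∃ r, eval r (f.map (evalRingHom z)) = 0 ∧ dist v r < δ := by
  by_contra hcon
  push_neg at hcon
  have hfac := (IsAlgClosed.splits _).eq_prod_roots_of_monic (monic_map hmonic z)
  have hev : eval v (f.map (evalRingHom z)) =
      ((f.map (evalRingHom z)).roots.map fun r => v - r).prod := by
    conv_lhs => rw [hfac]
    rw [eval_multiset_prod, Multiset.map_map]
    simp
  have hge : ∀ r ∈ (f.map (evalRingHom z)).roots, δ ≤ ‖v - r‖ := by
    intro r hr
    have hroot : eval r (f.map (evalRingHom z)) = 0 :=
      (mem_roots'.mp hr).2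
    have := hcon r hroot
    rw [Complex.dist_eq] at this
    simpa using this
  have := pow_le_prod v δ hδ.le _ hge
  rw [card_roots hmonic hdeg] at this
  rw [hev] at hv
  linarith

end Statement1Aux

namespace Statement1Aux

open Polynomial

variable {n : ℕ} {f : Polynomial (Polynomial ℂ)}

lemma index_unique {w : Fin n → ℂ} {ε : ℝ}
    (hsep : ∀ i j, i ≠ j → 2 * ε ≤ dist (w i) (w j)) {r : ℂ} {a b : Fin n}
    (ha : dist r (w a) < ε) (hb : dist r (w b) < ε) : a = b := by
  by_contra hab
  have := hsep a b hab
  have htri := dist_triangle (w a) r (w b)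
  rw [dist_comm (w a) r] at htri
  linarith

lemma toFinset_card_eq (hmonic : f.Monic) (hdeg : f.natDegree = n) (z : ℂ)
    (hbase : ¬ ({w : ℂ | eval w (f.map (evalRingHom z)) = 0}).ncard < n) :
    (f.map (evalRingHom z)).roots.toFinset.card = n := by
  have hset : {w : ℂ | eval w (f.map (evalRingHom z)) = 0} =
      ↑(f.map (evalRingHom z)).roots.toFinset := by
    ext r
    simp only [Set.mem_setOf_eq, Finset.coe_sort_coe, Multiset.mem_toFinset, Finset.mem_coe,
      mem_roots', IsRoot.def]
    exact ⟨fun h => ⟨(monic_map hmonic z).ne_zero, h⟩, fun h => h.2⟩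
  rw [hset, Set.ncard_coe_finset] at hbase
  have hle : (f.map (evalRingHom z)).roots.toFinset.card ≤ n := by
    rw [← card_roots hmonic hdeg z]
    exact Multiset.toFinset_card_le _
  omega

/-- Counting lemma: if `z` is in the base and every `ε`-ball around `w i` contains a root,
then every root is in some ball, and each ball contains exactly one root. -/
lemma counting (hmonic : f.Monic) (hdeg : f.natDegree = n) {w : Fin n → ℂ} {ε : ℝ}
    (hsep : ∀ i j, i ≠ j → 2 * ε ≤ dist (w i) (w j)) (z : ℂ)
    (hbase : ¬ ({w : ℂ | eval w (f.map (evalRingHom z)) = 0}).ncard < n)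
    (hO : ∀ i, ∃ r, eval r (f.map (evalRingHom z)) = 0 ∧ dist r (w i) < ε) :
    (∀ r, eval r (f.map (evalRingHom z)) = 0 → ∃ i, dist r (w i) < ε) ∧
    (∀ (i : Fin n) (r r' : ℂ), eval r (f.map (evalRingHom z)) = 0 → dist r (w i) < ε →
      eval r' (f.map (evalRingHom z)) = 0 → dist r' (w i) < ε → r = r') := by
  classical
  set S := (f.map (evalRingHom z)).roots.toFinset with hS
  have hmem : ∀ r : ℂ, eval r (f.map (evalRingHom z)) = 0 → r ∈ S := by
    intro r hr
    simp only [hS, Multiset.mem_toFinset, mem_roots', IsRoot.def]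
    exact ⟨(monic_map hmonic z).ne_zero, hr⟩
  have hmem' : ∀ r ∈ S, eval r (f.map (evalRingHom z)) = 0 := by
    intro r hr
    simp only [hS, Multiset.mem_toFinset, mem_roots', IsRoot.def] at hr
    exact hr.2
  have hcard : S.card = n := toFinset_card_eq hmonic hdeg z hbase
  set ι : Fin n → ↥S := fun i => ⟨(hO i).choose, hmem _ (hO i).choose_spec.1⟩ with hι
  have hι_ball : ∀ i, dist (ι i : ℂ) (w i) < ε := fun i => (hO i).choose_spec.2
  have hinj : Function.Injective ι := by
    intro a b hab
    refine index_unique hsep (hι_ball a) ?_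
    rw [hab]; exact hι_ball b
  have hbij : Function.Bijective ι :=
    (Fintype.bijective_iff_injective_and_card ι).mpr
      ⟨hinj, by rw [Fintype.card_fin, Fintype.card_coe, hcard]⟩
  have hsurj : ∀ r : ℂ, r ∈ S → ∃ i, (ι i : ℂ) = r := by
    intro r hr
    obtain ⟨i, hi⟩ := hbij.2 ⟨r, hr⟩
    exact ⟨i, congrArg Subtype.val hi⟩
  constructor
  · intro r hr
    obtain ⟨i, hi⟩ := hsurj r (hmem r hr)
    exact ⟨i, by rw [← hi]; exact hι_ball i⟩
  · intro i r r' hr hrb hr' hrb'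
    obtain ⟨a, ha⟩ := hsurj r (hmem r hr)
    obtain ⟨b, hb⟩ := hsurj r' (hmem r' hr')
    have hai : a = i := index_unique hsep (hι_ball a) (by rw [ha]; exact hrb)
    have hbi : b = i := index_unique hsep (hι_ball b) (by rw [hb]; exact hrb')
    rw [← ha, ← hb, hai, hbi]
end Statement1Aux

namespace Statement1Aux

open Polynomial Filter Topology

variable {n : ℕ} {f : Polynomial (Polynomial ℂ)}

lemma eventually_small (hroot : eval v (f.map (evalRingHom z₁)) = 0) {c : ℝ} (hc : 0 < c) :
    ∀ᶠ z in 𝓝 z₁, ‖eval v (f.map (evalRingHom z))‖ < c := by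
  have hc' : Tendsto (fun z => eval v (f.map (evalRingHom z))) (𝓝 z₁)
      (𝓝 (eval v (f.map (evalRingHom z₁)))) := (cont_eval f v).tendsto z₁
  rw [hroot] at hc'
  have hmem : {x : ℂ | ‖x‖ < c} ∈ 𝓝 (0 : ℂ) :=
    (isOpen_lt continuous_norm continuous_const).mem_nhds (by simpa using hc)
  exact hc'.eventually (eventually_iff.mpr hmem)

lemma isOpen_O (hmonic : f.Monic) (hdeg : f.natDegree = n) (w : Fin n → ℂ) (ε : ℝ) :
    IsOpen {z : ℂ | ∀ i, ∃ r, eval r (f.map (evalRingHom z)) = 0 ∧ dist r (w i) < ε} := by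
  have : {z : ℂ | ∀ i, ∃ r, eval r (f.map (evalRingHom z)) = 0 ∧ dist r (w i) < ε} =
      ⋂ i, {z : ℂ | ∃ r, eval r (f.map (evalRingHom z)) = 0 ∧ dist r (w i) < ε} := by
    ext z; simp [Set.mem_iInter]
  rw [this]
  refine isOpen_iInter_of_finite fun i => ?_
  rw [isOpen_iff_mem_nhds]
  rintro z₁ ⟨r₁, hr₁, hd₁⟩
  have hδ : 0 < ε - dist r₁ (w i) := by linarith
  have hev := eventually_small (v := r₁) (z₁ := z₁) (f := f) hr₁
    (pow_pos hδ n)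
  rw [← eventually_iff]
  filter_upwards [hev] with z hz
  obtain ⟨r, hr, hd⟩ := exists_root_near hmonic hdeg z r₁ _ hδ hz
  refine ⟨r, hr, ?_⟩
  calc dist r (w i) ≤ dist r r₁ + dist r₁ (w i) := dist_triangle _ _ _
  _ < (ε - dist r₁ (w i)) + dist r₁ (w i) := by rw [dist_comm r r₁]; linarith
  _ = ε := by ring

lemma exists_root (hmonic : f.Monic) (hdeg : f.natDegree = n) (hn : 1 ≤ n) (z : ℂ) :
    ∃ r, eval r (f.map (evalRingHom z)) = 0 := by
  have := card_roots hmonic hdeg z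
  have hpos : 0 < Multiset.card (f.map (evalRingHom z)).roots := by omega
  obtain ⟨r, hr⟩ := Multiset.card_pos_iff_exists_mem.mp hpos
  exact ⟨r, (mem_roots'.mp hr).2⟩

open scoped Classical in
/-- the local section: the root of `f(z,·)` near `w i`, if one exists. -/
noncomputable def sig (f : Polynomial (Polynomial ℂ)) (hmonic : f.Monic) (hdeg : f.natDegree = n)
    (hn : 1 ≤ n) (w : Fin n → ℂ) (ε : ℝ) (z : ℂ) (i : Fin n) : ℂ :=
  if h : ∃ r, eval r (f.map (evalRingHom z)) = 0 ∧ dist r (w i) < ε then h.choose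
  else (exists_root hmonic hdeg hn z).choose

lemma sig_root (hmonic : f.Monic) (hdeg : f.natDegree = n) (hn : 1 ≤ n) (w : Fin n → ℂ) (ε : ℝ)
    (z : ℂ) (i : Fin n) : eval (sig f hmonic hdeg hn w ε z i) (f.map (evalRingHom z)) = 0 := by
  classical
  rw [sig]
  split
  · next h => exact h.choose_spec.1
  · exact (exists_root hmonic hdeg hn z).choose_spec

lemma sig_ball (hmonic : f.Monic) (hdeg : f.natDegree = n) (hn : 1 ≤ n) (w : Fin n → ℂ) (ε : ℝ)
    (z : ℂ) (i : Fin n) (h : ∃ r, eval r (f.map (evalRingHom z)) = 0 ∧ dist r (w i) < ε) :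
    dist (sig f hmonic hdeg hn w ε z i) (w i) < ε := by
  classical
  rw [sig, dif_pos h]
  exact h.choose_spec.2

end Statement1Aux

namespace Statement1Aux

open Polynomial Filter Topology

variable {n : ℕ} {f : Polynomial (Polynomial ℂ)}

lemma sig_unique (hmonic : f.Monic) (hdeg : f.natDegree = n) (hn : 1 ≤ n) {w : Fin n → ℂ} {ε : ℝ}
    (hsep : ∀ i j, i ≠ j → 2 * ε ≤ dist (w i) (w j)) (z : ℂ)
    (hbase : ¬ ({v : ℂ | eval v (f.map (evalRingHom z)) = 0}).ncard < n)
    (hO : ∀ j, ∃ r, eval r (f.map (evalRingHom z)) = 0 ∧ dist r (w j) < ε) (i : Fin n)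
    {r : ℂ} (hr : eval r (f.map (evalRingHom z)) = 0) (hrb : dist r (w i) < ε) :
    r = sig f hmonic hdeg hn w ε z i :=
  (counting hmonic hdeg hsep z hbase hO).2 i r _ hr hrb
    (sig_root hmonic hdeg hn w ε z i) (sig_ball hmonic hdeg hn w ε z i (hO i))

lemma sig_continuousOn (hmonic : f.Monic) (hdeg : f.natDegree = n) (hn : 1 ≤ n)
    {w : Fin n → ℂ} {ε : ℝ} (hsep : ∀ i j, i ≠ j → 2 * ε ≤ dist (w i) (w j)) (i : Fin n) :
    ContinuousOn (fun z => sig f hmonic hdeg hn w ε z i)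
      {z : ℂ | (∀ j, ∃ r, eval r (f.map (evalRingHom z)) = 0 ∧ dist r (w j) < ε) ∧
        ¬ ({v : ℂ | eval v (f.map (evalRingHom z)) = 0}).ncard < n} := by
  intro z₁ hz₁
  obtain ⟨hO₁, hbase₁⟩ := hz₁
  rw [ContinuousWithinAt, Metric.tendsto_nhds]
  intro η hη
  have hv₁root := sig_root hmonic hdeg hn w ε z₁ i
  have hv₁ball := sig_ball hmonic hdeg hn w ε z₁ i (hO₁ i)
  set v₁ := sig f hmonic hdeg hn w ε z₁ i with hv₁
  set δ := min η (ε - dist v₁ (w i)) with hδdef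
  have hδ : 0 < δ := lt_min hη (by linarith)
  have hev := (eventually_small hv₁root (pow_pos hδ n)).filter_mono
    (nhdsWithin_le_nhds (s := {z : ℂ | (∀ j, ∃ r, eval r (f.map (evalRingHom z)) = 0 ∧
      dist r (w j) < ε) ∧ ¬ ({v : ℂ | eval v (f.map (evalRingHom z)) = 0}).ncard < n}))
  filter_upwards [hev, self_mem_nhdsWithin] with z hz hzs
  obtain ⟨r, hr, hd⟩ := exists_root_near hmonic hdeg z v₁ δ hδ hz
  have hrball : dist r (w i) < ε := by
    calc dist r (w i) ≤ dist r v₁ + dist v₁ (w i) := dist_triangle _ _ _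
    _ < δ + dist v₁ (w i) := by rw [dist_comm r v₁]; linarith
    _ ≤ (ε - dist v₁ (w i)) + dist v₁ (w i) := by
        have := min_le_right η (ε - dist v₁ (w i)); linarith
    _ = ε := by ring
  have heq : r = sig f hmonic hdeg hn w ε z i :=
    sig_unique hmonic hdeg hn hsep z hzs.2 hzs.1 i hr hrball
  rw [← heq, dist_comm]
  calc dist v₁ r < δ := hd
  _ ≤ η := min_le_left _ _

end Statement1Aux

namespace Statement1Aux

open Polynomial Filter Topology

variable {n : ℕ} {f : Polynomial (Polynomial ℂ)}

lemma exists_sep {w : Fin n → ℂ} (hw : Function.Injective w) :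
    ∃ ε : ℝ, 0 < ε ∧ ∀ i j, i ≠ j → 2 * ε ≤ dist (w i) (w j) := by
  classical
  set P := (Finset.univ.offDiag).image fun p : Fin n × Fin n => dist (w p.1) (w p.2) with hP
  by_cases hne : P.Nonempty
  · refine ⟨P.min' hne / 2, ?_, ?_⟩
    · obtain ⟨⟨i, j⟩, hij, hd⟩ := Finset.mem_image.mp (P.min'_mem hne)
      rw [Finset.mem_offDiag] at hij
      have : 0 < dist (w i) (w j) :=
        dist_pos.mpr (fun h => hij.2.2 (hw h))
      rw [hd] at this
      linarith
    · intro i j hij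
      have hmem : dist (w i) (w j) ∈ P := Finset.mem_image.mpr
        ⟨(i, j), Finset.mem_offDiag.mpr ⟨Finset.mem_univ _, Finset.mem_univ _, hij⟩, rfl⟩
      have := P.min'_le _ hmem
      linarith
  · refine ⟨1, one_pos, fun i j hij => absurd ?_ hne⟩
    exact ⟨dist (w i) (w j), Finset.mem_image.mpr
      ⟨(i, j), Finset.mem_offDiag.mpr ⟨Finset.mem_univ _, Finset.mem_univ _, hij⟩, rfl⟩⟩

lemma exists_triv (n : ℕ) (hn : 1 ≤ n) (f : Polynomial (Polynomial ℂ))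
    (hmonic : f.Monic) (hdeg : f.natDegree = n)
    (π : {p : ℂ × ℂ // Polynomial.eval p.2 (f.map (Polynomial.evalRingHom p.1)) = 0 ∧
            ¬ ({w : ℂ | Polynomial.eval w (f.map (Polynomial.evalRingHom p.1)) = 0}).ncard < n} →
         {z : ℂ | ¬ ({w : ℂ | Polynomial.eval w (f.map (Polynomial.evalRingHom z)) = 0}).ncard < n})
    (hπ : ∀ p, (π p : ℂ) = (p : ℂ × ℂ).1)
    (x : {z : ℂ | ¬ ({w : ℂ | Polynomial.eval w (f.map (Polynomial.evalRingHom z)) = 0}).ncard < n}) :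
    ∃ t : Bundle.Trivialization (Fin n) π, x ∈ t.baseSet := by
  classical
  obtain ⟨z₀, hx⟩ := x
  have hcard : (f.map (evalRingHom z₀)).roots.toFinset.card = n :=
    toFinset_card_eq hmonic hdeg z₀ hx
  set w : Fin n → ℂ := fun i => ((Finset.equivFinOfCardEq hcard).symm i : ℂ) with hwdef
  have hw_root : ∀ i, eval (w i) (f.map (evalRingHom z₀)) = 0 := by
    intro i
    have hmem := ((Finset.equivFinOfCardEq hcard).symm i).2
    rw [Multiset.mem_toFinset, mem_roots'] at hmem
    exact hmem.2
  have hw_inj : Function.Injective w := fun a b hab =>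
    (Finset.equivFinOfCardEq hcard).symm.injective (Subtype.ext hab)
  obtain ⟨ε, hε, hsep⟩ := exists_sep hw_inj
  set O : Set ℂ := {z : ℂ | ∀ i, ∃ r, eval r (f.map (evalRingHom z)) = 0 ∧ dist r (w i) < ε}
    with hOdef
  have hOopen : IsOpen O := isOpen_O hmonic hdeg w ε
  have hz₀O : z₀ ∈ O := fun i => ⟨w i, hw_root i, by simpa using hε⟩
  set idx : ℂ → Fin n := fun v => if h : ∃ i, dist v (w i) < ε then h.choose else ⟨0, hn⟩
    with hidxdef
  have idx_ball : ∀ v : ℂ, (∃ i, dist v (w i) < ε) → dist v (w (idx v)) < ε := by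
    intro v h
    simp only [hidxdef, dif_pos h]
    exact h.choose_spec
  have idx_eq : ∀ (v : ℂ) (i : Fin n), dist v (w i) < ε → idx v = i := fun v i h =>
    index_unique hsep (idx_ball v ⟨i, h⟩) h
  have hπcont : Continuous π := by
    apply continuous_induced_rng.mpr
    have heq : Continuous fun p => (π p : ℂ) := by
      simp only [hπ]
      exact continuous_fst.comp continuous_subtype_val
    exact heq
  -- facts about points of the source
  have hsrc : ∀ p, π p ∈ (Subtype.val ⁻¹' O) → ((↑p : ℂ × ℂ).1 ∈ O ∧
      (∃ i, dist (↑p : ℂ × ℂ).2 (w i) < ε)) := by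
    intro p hp
    have hpO : (↑p : ℂ × ℂ).1 ∈ O := by
      have h1 : (π p : ℂ) ∈ O := hp
      rwa [hπ p] at h1
    exact ⟨hpO, (counting hmonic hdeg hsep _ p.2.2 hpO).1 _ p.2.1⟩
  refine ⟨{ toFun := fun p => (π p, idx (↑p : ℂ × ℂ).2),
            invFun := fun q => ⟨((↑q.1 : ℂ), sig f hmonic hdeg hn w ε (↑q.1 : ℂ) q.2),
              sig_root hmonic hdeg hn w ε _ _, q.1.2⟩,
            source := π ⁻¹' (Subtype.val ⁻¹' O),
            target := (Subtype.val ⁻¹' O) ×ˢ Set.univ,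
            map_source' := fun p hp => ⟨hp, Set.mem_univ _⟩,
            map_target' := ?_,
            left_inv' := ?_,
            right_inv' := ?_,
            open_source := (hOopen.preimage continuous_subtype_val).preimage hπcont,
            open_target := (hOopen.preimage continuous_subtype_val).prod isOpen_univ,
            continuousOn_toFun := ?_,
            continuousOn_invFun := ?_,
            baseSet := Subtype.val ⁻¹' O,
            open_baseSet := hOopen.preimage continuous_subtype_val,
            source_eq := rfl,
            target_eq := rfl,
            proj_toFun := fun p _ => rfl }, hz₀O⟩
  · -- map_target'
    rintro ⟨z, i⟩ hq
    have hq1 : (z : ℂ) ∈ O := hq.1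
    show π _ ∈ Subtype.val ⁻¹' O
    rw [Set.mem_preimage, hπ]
    exact hq1
  · -- left_inv'
    intro p hp
    obtain ⟨hpO, hex⟩ := hsrc p hp
    have hb := idx_ball _ hex
    apply Subtype.ext
    apply Prod.ext
    · exact hπ p
    · show sig f hmonic hdeg hn w ε ((π p : ℂ)) (idx (↑p : ℂ × ℂ).2) = (↑p : ℂ × ℂ).2
      rw [hπ p]
      exact (sig_unique hmonic hdeg hn hsep _ p.2.2 hpO _ p.2.1 hb).symm
  · -- right_inv'
    rintro ⟨z, i⟩ hq
    have hq1 : (z : ℂ) ∈ O := hq.1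
    apply Prod.ext
    · apply Subtype.ext
      rw [hπ]
    · show idx (sig f hmonic hdeg hn w ε (z : ℂ) i) = i
      exact idx_eq _ _ (sig_ball hmonic hdeg hn w ε _ i (hq1 i))
  · -- continuousOn_toFun
    apply ContinuousOn.prodMk (hπcont.continuousOn)
    intro p hp
    obtain ⟨hpO, hex⟩ := hsrc p hp
    have hA : IsOpen {q : {p : ℂ × ℂ // Polynomial.eval p.2 (f.map (Polynomial.evalRingHom p.1)) = 0 ∧
        ¬ ({w : ℂ | Polynomial.eval w (f.map (Polynomial.evalRingHom p.1)) = 0}).ncard < n} |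
        dist (↑q : ℂ × ℂ).2 (w (idx (↑p : ℂ × ℂ).2)) < ε} :=
      isOpen_lt ((continuous_snd.comp continuous_subtype_val).dist continuous_const)
        continuous_const
    have hpA : dist (↑p : ℂ × ℂ).2 (w (idx (↑p : ℂ × ℂ).2)) < ε := idx_ball _ hex
    have hev : ∀ᶠ q : {p : ℂ × ℂ // Polynomial.eval p.2 (f.map (Polynomial.evalRingHom p.1)) = 0 ∧
        ¬ ({w : ℂ | Polynomial.eval w (f.map (Polynomial.evalRingHom p.1)) = 0}).ncard < n}
        in 𝓝[π ⁻¹' (Subtype.val ⁻¹' O)] p,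
        idx (↑q : ℂ × ℂ).2 = idx (↑p : ℂ × ℂ).2 := by
      filter_upwards [mem_nhdsWithin_of_mem_nhds (hA.mem_nhds hpA)] with q hq
      exact idx_eq _ _ hq
    exact tendsto_const_nhds.congr' (hev.mono fun q h => h.symm)
  · -- continuousOn_invFun
    intro q₀ hq₀
    rw [ContinuousWithinAt, tendsto_subtype_rng]
    have hq₀O : (q₀.1 : ℂ) ∈ O := hq₀.1
    have hc1 : ContinuousWithinAt (fun q : ↥{z : ℂ | ¬ ({w : ℂ | eval w (f.map (evalRingHom z)) = 0}).ncard < n} × Fin n => (↑q.1 : ℂ))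
        ((Subtype.val ⁻¹' O) ×ˢ Set.univ) q₀ :=
      (continuous_subtype_val.comp continuous_fst).continuousWithinAt
    have hmap : Set.MapsTo (fun q : ↥{z : ℂ | ¬ ({w : ℂ | eval w (f.map (evalRingHom z)) = 0}).ncard < n} × Fin n => (↑q.1 : ℂ)) ((Subtype.val ⁻¹' O) ×ˢ Set.univ)
        {z : ℂ | (∀ j, ∃ r, eval r (f.map (evalRingHom z)) = 0 ∧ dist r (w j) < ε) ∧
          ¬ ({v : ℂ | eval v (f.map (evalRingHom z)) = 0}).ncard < n} := by
      rintro ⟨z, i⟩ hq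
      exact ⟨hq.1, z.2⟩
    have h1 : ContinuousWithinAt
        (fun q : ↥{z : ℂ | ¬ ({w : ℂ | eval w (f.map (evalRingHom z)) = 0}).ncard < n} × Fin n => sig f hmonic hdeg hn w ε (↑q.1 : ℂ) q₀.2)
        ((Subtype.val ⁻¹' O) ×ˢ Set.univ) q₀ :=
      ContinuousWithinAt.comp
        (f := fun q : ↥{z : ℂ | ¬ ({w : ℂ | eval w (f.map (evalRingHom z)) = 0}).ncard < n} ×
          Fin n => (↑q.1 : ℂ))
        (x := q₀)
        (s := (Subtype.val ⁻¹' O :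
          Set ↥{z : ℂ | ¬ ({w : ℂ | eval w (f.map (evalRingHom z)) = 0}).ncard < n}) ×ˢ Set.univ)
        (g := fun z => sig f hmonic hdeg hn w ε z q₀.2)
        (t := {z : ℂ | (∀ j, ∃ r, eval r (f.map (evalRingHom z)) = 0 ∧ dist r (w j) < ε) ∧
          ¬ ({v : ℂ | eval v (f.map (evalRingHom z)) = 0}).ncard < n})
        ((sig_continuousOn hmonic hdeg hn hsep q₀.2) _ ⟨hq₀O, q₀.1.2⟩) hc1 hmap
    have hSq : IsOpen {q : ↥{z : ℂ | ¬ ({w : ℂ | eval w (f.map (evalRingHom z)) = 0}).ncard < n} × Fin n | q.2 = q₀.2} :=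
      continuous_snd.isOpen_preimage {q₀.2} (isOpen_discrete _)
    have h2 : ContinuousWithinAt
        (fun q : ↥{z : ℂ | ¬ ({w : ℂ | eval w (f.map (evalRingHom z)) = 0}).ncard < n} × Fin n => sig f hmonic hdeg hn w ε (↑q.1 : ℂ) q.2)
        ((Subtype.val ⁻¹' O) ×ˢ Set.univ) q₀ := by
      refine h1.congr_of_eventuallyEq ?_ rfl
      filter_upwards [mem_nhdsWithin_of_mem_nhds (hSq.mem_nhds rfl)] with q hq
      rw [hq]
    exact (hc1.prodMk h2 : _)

end Statement1Aux

namespace Statement1Aux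

open Polynomial

lemma ncard_eq {n : ℕ} {f : Polynomial (Polynomial ℂ)} (hmonic : f.Monic)
    (hdeg : f.natDegree = n) (z : ℂ)
    (hbase : ¬ ({w : ℂ | eval w (f.map (evalRingHom z)) = 0}).ncard < n) :
    ({w : ℂ | eval w (f.map (evalRingHom z)) = 0}).ncard = n := by
  have hset : {w : ℂ | eval w (f.map (evalRingHom z)) = 0} =
      ↑(f.map (evalRingHom z)).roots.toFinset := by
    ext r
    simp only [Set.mem_setOf_eq, Finset.coe_sort_coe, Multiset.mem_toFinset, Finset.mem_coe,
      mem_roots', IsRoot.def]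
    exact ⟨fun h => ⟨(monic_map hmonic z).ne_zero, h⟩, fun h => h.2⟩
  rw [hset, Set.ncard_coe_finset, toFinset_card_eq hmonic hdeg z hbase]

lemma fiber_card (n : ℕ) (hn : 1 ≤ n) (f : Polynomial (Polynomial ℂ))
    (hmonic : f.Monic) (hdeg : f.natDegree = n)
    (π : {p : ℂ × ℂ // Polynomial.eval p.2 (f.map (Polynomial.evalRingHom p.1)) = 0 ∧
            ¬ ({w : ℂ | Polynomial.eval w (f.map (Polynomial.evalRingHom p.1)) = 0}).ncard < n} →
         {z : ℂ | ¬ ({w : ℂ | Polynomial.eval w (f.map (Polynomial.evalRingHom z)) = 0}).ncard < n})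
    (hπ : ∀ p, (π p : ℂ) = (p : ℂ × ℂ).1)
    (z : {z : ℂ | ¬ ({w : ℂ | Polynomial.eval w (f.map (Polynomial.evalRingHom z)) = 0}).ncard < n}) :
    Nat.card (π ⁻¹' {z}) = n := by
  have e : (π ⁻¹' {z}) ≃ {v : ℂ | eval v (f.map (evalRingHom (z : ℂ))) = 0} :=
    { toFun := fun p => ⟨(↑p.1 : ℂ × ℂ).2, by
        have hz : π p.1 = z := p.2
        have h1 : (↑p.1 : ℂ × ℂ).1 = (z : ℂ) := by rw [← hπ p.1, hz]
        have h2 := p.1.2.1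
        rw [h1] at h2
        exact h2⟩,
      invFun := fun r => ⟨⟨((z : ℂ), r.1), ⟨r.2, z.2⟩⟩, Subtype.ext (hπ _)⟩,
      left_inv := by
        rintro ⟨⟨⟨a, b⟩, hab⟩, hp⟩
        have hz : π (⟨(a, b), hab⟩ :
            {p : ℂ × ℂ // Polynomial.eval p.2 (f.map (Polynomial.evalRingHom p.1)) = 0 ∧
              ¬ ({w : ℂ | Polynomial.eval w (f.map (Polynomial.evalRingHom p.1)) = 0}).ncard
                < n}) = z := hp
        have h1 : a = (z : ℂ) := by
          have h := hπ ⟨(a, b), hab⟩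
          rw [hz] at h
          exact h.symm
        apply Subtype.ext
        apply Subtype.ext
        exact Prod.ext h1.symm rfl,
      right_inv := fun r => Subtype.ext rfl }
  rw [Nat.card_congr e, Nat.card_coe_set_eq, ncard_eq hmonic hdeg _ z.2]

end Statement1Aux


/-- For `f(z,w) ∈ ℂ[z,w]` monic of degree `n ≥ 1` in `w` and squarefree,
with `V_f` its zero locus and `B = {z : f(z,·) has fewer than n distinct roots}`, the
first-coordinate projection restricted to `V_f ∖ (B × ℂ)`, viewed as a map onto `ℂ ∖ B`,
is a covering map all of whose fibers have exactly `n` elements. -/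
theorem statement1 (n : ℕ) (hn : 1 ≤ n) (f : Polynomial (Polynomial ℂ))
    (hmonic : f.Monic) (hdeg : f.natDegree = n) (hsq : Squarefree f)
    (π : {p : ℂ × ℂ // Polynomial.eval p.2 (f.map (Polynomial.evalRingHom p.1)) = 0 ∧
            ¬ ({w : ℂ | Polynomial.eval w (f.map (Polynomial.evalRingHom p.1)) = 0}).ncard < n} →
         {z : ℂ | ¬ ({w : ℂ | Polynomial.eval w (f.map (Polynomial.evalRingHom z)) = 0}).ncard < n})
    (hπ : ∀ p, (π p : ℂ) = (p : ℂ × ℂ).1) :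
    IsCoveringMap π ∧ ∀ z, Nat.card (π ⁻¹' {z}) = n := by
  exact ⟨IsFiberBundle.isCoveringMap (F := Fin n)
      (fun x => Statement1Aux.exists_triv n hn f hmonic hdeg π hπ x),
    fun z => Statement1Aux.fiber_card n hn f hmonic hdeg π hπ z⟩
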